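/- Let σ be an acyclic system of permutations on the edges of n·Δ_{d−1}, i.e., a family (σ_{ab})_{a≠b∈[d]} of permutations of [n] with σ_{ba} the reverse of σ_{ab}, such that each tournament G_{ij}(σ) on [d] (with a→b iff i precedes j in σ_{ab}) is acyclic. Define σ* = (σ*_{ij})_{i≠j∈[n]} where σ*_{ij} lists the vertices of G_{ij}(σ) by decreasing out-degree. Then σ* is itself an acyclic system (i.e., σ*_{ji} is the reverse of σ*_{ij} and all tournaments G_{ab}(σ*) on [n] are acyclic), and (σ*)* = σ. -/
import Mathlib


open scoped Classical

/-- `i` precedes `j` in the permutation `u`, viewed as the word `u 0, u 1, ..., u (n-1)`. -/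
def precedes {n : ℕ} (u : Equiv.Perm (Fin n)) (i j : Fin n) : Prop :=
  u.symm i < u.symm j

/-- A directed graph (relation) is acyclic: no directed cycle, i.e. no vertex reaches
itself by a nonempty directed walk. -/
def IsAcyclicRel {d : ℕ} (r : Fin d → Fin d → Prop) : Prop :=
  ∀ a, ¬ Relation.TransGen r a a

/-- The tournament `G_{ij}(σ)` on `[d]`: `a → b` iff `i` precedes `j` in `σ_{ab}`. -/
def tournG {n d : ℕ} (σ : Fin d → Fin d → Equiv.Perm (Fin n)) (i j : Fin n)
    (a b : Fin d) : Prop :=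
  a ≠ b ∧ precedes (σ a b) i j

/-- A system of permutations on the edges of `n·Δ_{d-1}`: a family `(σ_{ab})` of
permutations of `[n]` with `σ_{ba}` the reverse word of `σ_{ab}`. -/
def IsSystem {n d : ℕ} (σ : Fin d → Fin d → Equiv.Perm (Fin n)) : Prop :=
  ∀ a b : Fin d, a ≠ b → ∀ k : Fin n, σ b a k = σ a b k.rev

/-- An acyclic system of permutations: all the tournaments `G_{ij}(σ)` are acyclic. -/
def IsAcyclicSystem {n d : ℕ} (σ : Fin d → Fin d → Equiv.Perm (Fin n)) : Prop :=
  IsSystem σ ∧ ∀ i j : Fin n, i ≠ j → IsAcyclicRel (tournG σ i j)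

/-- `a` is the unique source (vertex with no incoming edge) of the digraph `r`. -/
def IsUniqueSource {d : ℕ} (r : Fin d → Fin d → Prop) (a : Fin d) : Prop :=
  (∀ b, ¬ r b a) ∧ ∀ a', (∀ b, ¬ r b a') → a' = a

/-- Out-degree of a vertex in a digraph on `[d]`. -/
noncomputable def outdeg {d : ℕ} (r : Fin d → Fin d → Prop) (a : Fin d) : ℕ :=
  (Finset.univ.filter fun b => r a b).card

/-- `a`-th coordinate of the position of the `i`-th simplex of an acyclic system `σ`:
`x_a^i = |{ j ≠ i : a is the unique source of G_{ij}(σ) }|`. -/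
noncomputable def simplexPos {n d : ℕ} (σ : Fin d → Fin d → Equiv.Perm (Fin n))
    (i : Fin n) (a : Fin d) : ℕ :=
  (Finset.univ.filter fun j : Fin n => j ≠ i ∧ IsUniqueSource (tournG σ i j) a).card

/-- `τ` is the dual system `σ*` of `σ`: for `i ≠ j`, the word `τ i j` lists the vertices
of the tournament `G_{ij}(σ)` in decreasing order of out-degree. -/
def IsDualOf {n d : ℕ} (σ : Fin d → Fin d → Equiv.Perm (Fin n))
    (τ : Fin n → Fin n → Equiv.Perm (Fin d)) : Prop :=
  ∀ i j : Fin n, i ≠ j → ∀ k : Fin d,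
    outdeg (tournG σ i j) (τ i j k) = d - 1 - (k : ℕ)

/-- The order-preserving injection `Fin (d-1) → Fin d` skipping `a`. -/
def liftIdx {d : ℕ} (a : Fin d) (b : Fin (d - 1)) : Fin d :=
  if h : (b : ℕ) < (a : ℕ) then ⟨b, by have := a.isLt; omega⟩
  else ⟨(b : ℕ) + 1, by have := b.isLt; omega⟩

/-- `v` is the permutation (word) of `[n] ∖ {i}` obtained from `u` by deleting the letter
`i`, with the remaining letters relabelled order-preservingly by `liftIdx i`. -/
def IsDeletionOf {n : ℕ} (v : Equiv.Perm (Fin (n - 1))) (u : Equiv.Perm (Fin n))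
    (i : Fin n) : Prop :=
  ∀ x y : Fin (n - 1), precedes v x y ↔ precedes u (liftIdx i x) (liftIdx i y)

section Aux

variable {d : ℕ} {r : Fin d → Fin d → Prop}

lemma aux_trans (htour : ∀ a b : Fin d, a ≠ b → (r a b ↔ ¬ r b a))
    (hacy : IsAcyclicRel r) {a b c : Fin d} (hab : r a b) (hbc : r b c) : r a c := by
  have hne2 : a ≠ c := by
    rintro rfl
    exact hacy a ((Relation.TransGen.single hab).tail hbc)
  by_contra h
  have hca : r c a := by have := htour a c hne2; tauto
  exact hacy a (((Relation.TransGen.single hab).tail hbc).tail hca)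

lemma aux_outdeg_lt (htour : ∀ a b : Fin d, a ≠ b → (r a b ↔ ¬ r b a))
    (hacy : IsAcyclicRel r) {a b : Fin d} (hab : r a b) :
    outdeg r b < outdeg r a := by
  have hirr : ¬ r b b := fun h => hacy b (.single h)
  unfold outdeg
  apply Finset.card_lt_card
  rw [Finset.ssubset_iff_of_subset]
  · exact ⟨b, by simp [hab], by simp [hirr]⟩
  · intro c hc
    simp only [Finset.mem_filter, Finset.mem_univ, true_and] at hc ⊢
    exact aux_trans htour hacy hab hc

lemma aux_rel_iff (htour : ∀ a b : Fin d, a ≠ b → (r a b ↔ ¬ r b a))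
    (hacy : IsAcyclicRel r) {a b : Fin d} (hne : a ≠ b) :
    r a b ↔ outdeg r b < outdeg r a := by
  constructor
  · exact aux_outdeg_lt htour hacy
  · intro h
    by_contra hab
    have hba : r b a := by have := htour a b hne; tauto
    have := aux_outdeg_lt htour hacy hba
    omega

lemma aux_outdeg_inj (htour : ∀ a b : Fin d, a ≠ b → (r a b ↔ ¬ r b a))
    (hacy : IsAcyclicRel r) {a b : Fin d} (h : outdeg r a = outdeg r b) : a = b := by
  by_contra hne
  rcases Classical.em (r a b) with hab | hab
  · have := aux_outdeg_lt htour hacy hab; omega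
  · have hba : r b a := by have := htour a b hne; tauto
    have := aux_outdeg_lt htour hacy hba; omega

lemma aux_outdeg_add (htour : ∀ a b : Fin d, a ≠ b → (r a b ↔ ¬ r b a))
    (hacy : IsAcyclicRel r) (a : Fin d) :
    outdeg r a + outdeg (fun x y => r y x) a = d - 1 := by
  classical
  unfold outdeg
  beta_reduce
  have h1 : (Finset.univ.filter fun b => r a b) ∪ (Finset.univ.filter fun b => r b a)
      = Finset.univ.erase a := by
    ext c
    simp only [Finset.mem_union, Finset.mem_filter, Finset.mem_univ, true_and,
      Finset.mem_erase, and_true]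
    constructor
    · rintro (h | h) rfl
      · exact hacy c (.single h)
      · exact hacy c (.single h)
    · intro hc
      have := htour a c (fun h => hc h.symm)
      tauto
  have h2 : Disjoint (Finset.univ.filter fun b => r a b)
      (Finset.univ.filter fun b => r b a) := by
    rw [Finset.disjoint_left]
    intro c hc1 hc2
    simp only [Finset.mem_filter, Finset.mem_univ, true_and] at hc1 hc2
    exact hacy a ((Relation.TransGen.single hc1).tail hc2)
  have h3 := Finset.card_union_of_disjoint h2
  rw [h1, Finset.card_erase_of_mem (Finset.mem_univ a)] at h3
  simp only [Finset.card_univ, Fintype.card_fin] at h3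
  omega

end Aux

section Main

variable {n d : ℕ}

lemma symm_rev {σ : Fin d → Fin d → Equiv.Perm (Fin n)} (hs : IsSystem σ)
    {a b : Fin d} (hab : a ≠ b) (x : Fin n) :
    (σ b a).symm x = ((σ a b).symm x).rev := by
  rw [Equiv.symm_apply_eq, hs a b hab, Fin.rev_rev, Equiv.apply_symm_apply]

lemma tournG_tour {σ : Fin d → Fin d → Equiv.Perm (Fin n)} (hs : IsSystem σ)
    {i j : Fin n} (hij : i ≠ j) :
    ∀ a b : Fin d, a ≠ b → (tournG σ i j a b ↔ ¬ tournG σ i j b a) := by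
  intro a b hab
  have hsi := symm_rev hs hab i
  have hsj := symm_rev hs hab j
  have hne : (σ a b).symm i ≠ (σ a b).symm j := fun h => hij (by simpa using (σ a b).symm.injective h)
  have hne' : ((σ a b).symm i : ℕ) ≠ ((σ a b).symm j : ℕ) := Fin.val_ne_of_ne hne
  have hvi := Fin.val_rev ((σ a b).symm i)
  have hvj := Fin.val_rev ((σ a b).symm j)
  have hlti := ((σ a b).symm i).isLt
  have hltj := ((σ a b).symm j).isLt
  simp only [tournG, precedes, hab, hab.symm, ne_eq, not_false_eq_true, true_and, hsi, hsj,
    Fin.lt_def]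
  omega

/-- For `i ≠ j`, `a ≠ b`: the word `τ i j` orders `a` before `b` iff `a → b` in `G_{ij}(σ)`. -/
lemma precedes_tau_iff {σ : Fin d → Fin d → Equiv.Perm (Fin n)}
    {τ : Fin n → Fin n → Equiv.Perm (Fin d)}
    (hσ : IsAcyclicSystem σ) (hτ : IsDualOf σ τ)
    {i j : Fin n} (hij : i ≠ j) {a b : Fin d} (hab : a ≠ b) :
    precedes (τ i j) a b ↔ tournG σ i j a b := by
  have htour := tournG_tour hσ.1 hij
  have hacy := hσ.2 i j hij
  have ha := hτ i j hij ((τ i j).symm a)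
  have hb := hτ i j hij ((τ i j).symm b)
  rw [Equiv.apply_symm_apply] at ha hb
  have hsa := ((τ i j).symm a).isLt
  have hsb := ((τ i j).symm b).isLt
  have hne : (τ i j).symm a ≠ (τ i j).symm b := fun h => hab (by simpa using (τ i j).symm.injective h)
  have hne' : ((τ i j).symm a : ℕ) ≠ ((τ i j).symm b : ℕ) := Fin.val_ne_of_ne hne
  rw [aux_rel_iff htour hacy hab, ha, hb]
  simp only [precedes, Fin.lt_def]
  omega

/-- The dual `σ*` of an acyclic system of permutations `σ` is itself an
acyclic system of permutations, and `(σ*)* = σ`. -/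
theorem stmt8 (n d : ℕ) (σ : Fin d → Fin d → Equiv.Perm (Fin n))
    (hσ : IsAcyclicSystem σ)
    (τ : Fin n → Fin n → Equiv.Perm (Fin d)) (hτ : IsDualOf σ τ) :
    IsAcyclicSystem τ ∧
    ∀ ρ : Fin d → Fin d → Equiv.Perm (Fin n), IsDualOf τ ρ →
      ∀ a b : Fin d, a ≠ b → ρ a b = σ a b := by
  -- characterization of tournG τ a b
  have charτ : ∀ (a b : Fin d), a ≠ b → ∀ i j : Fin n,
      tournG τ a b i j ↔ (σ a b).symm i < (σ a b).symm j := by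
    intro a b hab i j
    constructor
    · rintro ⟨hij, hp⟩
      have := (precedes_tau_iff hσ hτ hij hab).1 hp
      exact this.2
    · intro hlt
      have hij : i ≠ j := fun h => lt_irrefl _ (h ▸ hlt)
      exact ⟨hij, (precedes_tau_iff hσ hτ hij hab).2 ⟨hab, hlt⟩⟩
  -- tournG τ a b is a tournament
  have tourτ : ∀ (a b : Fin d), a ≠ b → ∀ i j : Fin n, i ≠ j →
      (tournG τ a b i j ↔ ¬ tournG τ a b j i) := by
    intro a b hab i j hij
    rw [charτ a b hab, charτ a b hab]
    have hne : (σ a b).symm i ≠ (σ a b).symm j :=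
      fun h => hij (by simpa using (σ a b).symm.injective h)
    have hne' := Fin.val_ne_of_ne hne
    simp only [Fin.lt_def]
    omega
  -- tournG τ a b is acyclic
  have acyτ : ∀ (a b : Fin d), a ≠ b → IsAcyclicRel (tournG τ a b) := by
    intro a b hab i hi
    have key : ∀ x y : Fin n, Relation.TransGen (tournG τ a b) x y →
        (σ a b).symm x < (σ a b).symm y := by
      intro x y h
      induction h with
      | single h => exact (charτ a b hab _ _).1 h
      | tail _ h2 ih => exact ih.trans ((charτ a b hab _ _).1 h2)
    exact lt_irrefl _ (key i i hi)

  refine ⟨⟨?_, fun a b hab => acyτ a b hab⟩, ?_⟩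
  · -- IsSystem τ
    intro i j hij k
    have htour := tournG_tour hσ.1 hij
    have hacy := hσ.2 i j hij
    -- tournG σ j i is the flip of tournG σ i j
    have hflip : ∀ x y : Fin d, tournG σ j i x y ↔ tournG σ i j y x := by
      intro x y
      rcases eq_or_ne x y with rfl | hxy
      · simp [tournG]
      · have hne : (σ x y).symm i ≠ (σ x y).symm j :=
          fun h => hij (by simpa using (σ x y).symm.injective h)
        have hne' := Fin.val_ne_of_ne hne
        have h2 := htour y x hxy.symm
        have hs := symm_rev hσ.1 hxy
        have hvi := Fin.val_rev ((σ x y).symm i)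
        have hvj := Fin.val_rev ((σ x y).symm j)
        have hlti := ((σ x y).symm i).isLt
        have hltj := ((σ x y).symm j).isLt
        simp only [tournG, precedes, hxy, hxy.symm, ne_eq, not_false_eq_true, true_and,
          hs i, hs j, Fin.lt_def] at h2 ⊢
        omega
    have houtflip : ∀ x : Fin d,
        outdeg (tournG σ j i) x = outdeg (fun p q => tournG σ i j q p) x := by
      intro x
      unfold outdeg
      congr 1
      exact Finset.filter_congr fun c _ => by simpa using (hflip x c)
    have h1 := hτ j i hij.symm k
    have h2 := hτ i j hij k.rev
    have hsum := aux_outdeg_add htour hacy (τ j i k)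
    rw [houtflip] at h1
    apply aux_outdeg_inj htour hacy
    rw [h2]
    have hk := k.isLt
    have hkr := Fin.val_rev k
    omega
  · -- (σ*)* = σ
    intro ρ hρ a b hab
    have houtτ : ∀ x : Fin n, outdeg (tournG τ a b) x = n - 1 - ((σ a b).symm x : ℕ) := by
      intro x
      unfold outdeg
      have hmap : Finset.univ.filter (fun jj => tournG τ a b x jj) =
          (Finset.Ioi ((σ a b).symm x)).map (σ a b).toEmbedding := by
        ext jj
        simp only [Finset.mem_filter, Finset.mem_univ, true_and, Finset.mem_map,
          Finset.mem_Ioi, Equiv.coe_toEmbedding, charτ a b hab]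
        constructor
        · intro h; exact ⟨(σ a b).symm jj, h, Equiv.apply_symm_apply _ _⟩
        · rintro ⟨y, hy, rfl⟩; simpa using hy
      rw [hmap, Finset.card_map, Fin.card_Ioi]
    ext k
    have h1 := hρ a b hab k
    have h2 : outdeg (tournG τ a b) (σ a b k) = n - 1 - (k : ℕ) := by
      rw [houtτ, Equiv.symm_apply_apply]
    rw [houtτ] at h1 h2
    have hinj := aux_outdeg_inj (tourτ a b hab) (acyτ a b hab) (r := tournG τ a b)
      (a := ρ a b k) (b := σ a b k) (by rw [houtτ, houtτ]; omega)
    exact congrArg Fin.val hinj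

end Main
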